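/- Let Δ = ∏_{i<j}(z_i − z_j) be the Vandermonde determinant and A the F-vector space of translation invariant antisymmetric polynomials in F[z₁,…,zₙ]. Then the linear map R → A given by q ↦ qΔ is a vector space isomorphism; moreover it maps the homogeneous degree-d part of R isomorphically onto the space of homogeneous translation invariant antisymmetric polynomials of degree d + n(n−1)/2. -/

import Mathlib

open MvPolynomial

/-- A polynomial is translation invariant if substituting `zᵢ ↦ zᵢ + c` fixes it for all `c`. -/
def TransInv {F : Type*} [CommSemiring F] {n : ℕ} (p : MvPolynomial (Fin n) F) : Prop :=
  ∀ c : F, aeval (fun i : Fin n => X i + C c) p = p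

/-- A polynomial is antisymmetric if every transposition of two variables negates it. -/
def Antisym {F : Type*} [CommRing F] {n : ℕ} (p : MvPolynomial (Fin n) F) : Prop :=
  ∀ i j : Fin n, i ≠ j → rename (Equiv.swap i j) p = -p

/-- The Vandermonde determinant `Δ = ∏_{i<j} (zᵢ - zⱼ)`. -/
noncomputable def vandermonde (F : Type*) [CommRing F] (n : ℕ) : MvPolynomial (Fin n) F :=
  ∏ q ∈ Finset.univ.filter (fun q : Fin n × Fin n => q.1 < q.2), (X q.1 - X q.2)

namespace Stmt6Aux

open Finset

/-- The embedding from the sigma type of ordered pairs into the product type. -/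
def pairEmb (n : ℕ) : (Σ _i : Fin n, Fin n) ↪ Fin n × Fin n where
  toFun x := (x.1, x.2)
  inj' := by rintro ⟨a, b⟩ ⟨c, d⟩ h; simp_all [Prod.ext_iff]

lemma pairs_eq (n : ℕ) :
    (Finset.univ.filter fun q : Fin n × Fin n => q.1 < q.2)
      = (Finset.univ.sigma fun i : Fin n => Finset.Ioi i).map (pairEmb n) := by
  ext ⟨a, b⟩
  simp only [mem_filter, mem_univ, true_and, mem_map, mem_sigma, mem_Ioi, pairEmb,
    Function.Embedding.coeFn_mk]
  constructor
  · intro h; exact ⟨⟨a, b⟩, h, rfl⟩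
  · rintro ⟨⟨x, y⟩, h, hxy⟩
    obtain ⟨rfl, rfl⟩ : x = a ∧ y = b := Prod.ext_iff.mp hxy
    exact h

lemma card_pairs (n : ℕ) :
    (Finset.univ.filter fun q : Fin n × Fin n => q.1 < q.2).card = n * (n - 1) / 2 := by
  rw [pairs_eq, Finset.card_map, Finset.card_sigma]
  simp only [Fin.card_Ioi]
  rw [Fin.sum_univ_eq_sum_range (fun i => n - 1 - i), Finset.sum_range_reflect (fun i => i) n]
  exact Finset.sum_range_id n

lemma prod_pairs {M : Type*} [CommMonoid M] {n : ℕ} (g : Fin n × Fin n → M) :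
    ∏ q ∈ Finset.univ.filter (fun q : Fin n × Fin n => q.1 < q.2), g q
      = ∏ i : Fin n, ∏ j ∈ Finset.Ioi i, g (i, j) := by
  rw [pairs_eq, Finset.prod_map, Finset.prod_sigma]
  rfl

variable {F : Type*} [Field F] {n : ℕ}

lemma vandermonde_eq_det :
    vandermonde F n = (-1 : MvPolynomial (Fin n) F) ^ (n * (n - 1) / 2) *
      (Matrix.vandermonde fun i : Fin n => (X i : MvPolynomial (Fin n) F)).det := by
  rw [Matrix.det_vandermonde, ← prod_pairs (fun q : Fin n × Fin n =>
    (X q.2 - X q.1 : MvPolynomial (Fin n) F)), ← card_pairs n]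
  unfold vandermonde
  rw [Finset.prod_congr rfl (fun q _ => show (X q.1 - X q.2 : MvPolynomial (Fin n) F)
    = (-1) * (X q.2 - X q.1) by ring), Finset.prod_mul_distrib, Finset.prod_const]

lemma rename_swap_vandermonde {i j : Fin n} (hij : i ≠ j) :
    rename (Equiv.swap i j) (vandermonde F n) = -vandermonde F n := by
  set M : Matrix (Fin n) (Fin n) (MvPolynomial (Fin n) F) :=
    Matrix.vandermonde fun i : Fin n => (X i : MvPolynomial (Fin n) F) with hM
  have h1 : rename (Equiv.swap i j) M.det = (M.map (rename (Equiv.swap i j))).det :=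
    RingHom.map_det (rename (R := F) (Equiv.swap i j)).toRingHom M
  have h2 : M.map (rename (R := F) (Equiv.swap i j)) = M.submatrix (Equiv.swap i j) id := by
    ext a b
    simp [hM, Matrix.vandermonde, Matrix.map_apply, Matrix.submatrix_apply]
  have h3 : rename (Equiv.swap i j) M.det = -M.det := by
    rw [h1, h2, Matrix.det_permute, Equiv.Perm.sign_swap hij]
    push_cast
    ring
  rw [vandermonde_eq_det, map_mul, map_pow, map_neg, map_one, h3]
  ring

lemma vandermonde_ne_zero : vandermonde F n ≠ 0 := by
  unfold vandermonde
  rw [Finset.prod_ne_zero_iff]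
  intro q hq
  rw [Finset.mem_filter] at hq
  exact sub_ne_zero.mpr fun h => hq.2.ne (X_injective h)

lemma transInv_vandermonde : TransInv (vandermonde F n) := by
  intro c
  unfold vandermonde
  rw [map_prod]
  refine Finset.prod_congr rfl fun q _ => ?_
  rw [map_sub, aeval_X, aeval_X]
  ring

lemma vandermonde_isHomogeneous :
    (vandermonde F n).IsHomogeneous (n * (n - 1) / 2) := by
  unfold vandermonde
  rw [← card_pairs n, Finset.card_eq_sum_ones]
  exact MvPolynomial.IsHomogeneous.prod _ _ _
    (fun q _ => (isHomogeneous_X F q.1).sub (isHomogeneous_X F q.2))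

/-- The substitution sending `X j` to `X i` and fixing all other variables. -/
noncomputable def subst (F : Type*) [Field F] {n : ℕ} (i j : Fin n) :
    MvPolynomial (Fin n) F →ₐ[F] MvPolynomial (Fin n) F :=
  aeval (fun k => if k = j then X i else X k)

lemma subst_X (i j k : Fin n) :
    subst F i j (X k) = if k = j then X i else X k := by
  simp [subst]

lemma subst_sub_self_mem (i j : Fin n) (p : MvPolynomial (Fin n) F) :
    p - subst F i j p ∈ Ideal.span {(X i - X j : MvPolynomial (Fin n) F)} := by
  induction p using MvPolynomial.induction_on with
  | C a => simp [subst]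
  | add p q hp hq =>
      have h := Ideal.add_mem _ hp hq
      rw [map_add]
      convert h using 1
      ring
  | mul_X p k hp =>
      rw [map_mul, subst_X]
      have hXk : (X k : MvPolynomial (Fin n) F) - (if k = j then X i else X k)
          ∈ Ideal.span {(X i - X j : MvPolynomial (Fin n) F)} := by
        split_ifs with hk
        · subst hk
          have : (X k : MvPolynomial (Fin n) F) - X i = -(X i - X k) := by ring
          rw [this]
          exact neg_mem (Ideal.subset_span rfl)
        · simp
      have heq : p * X k - subst F i j p * (if k = j then X i else X k)
          = p * ((X k : MvPolynomial (Fin n) F) - (if k = j then X i else X k))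
            + (p - subst F i j p) * (if k = j then X i else X k) := by ring
      rw [heq]
      exact Ideal.add_mem _ (Ideal.mul_mem_left _ _ hXk) (Ideal.mul_mem_right _ _ hp)

lemma subst_generator {i j : Fin n} (hij : i ≠ j) :
    subst F i j (X i - X j : MvPolynomial (Fin n) F) = 0 := by
  rw [map_sub, subst_X, subst_X, if_neg hij, if_pos rfl, sub_self]

lemma mem_span_of_subst_eq_zero {i j : Fin n} {p : MvPolynomial (Fin n) F}
    (hp : subst F i j p = 0) :
    p ∈ Ideal.span {(X i - X j : MvPolynomial (Fin n) F)} := by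
  have := subst_sub_self_mem i j p
  rwa [hp, sub_zero] at this

lemma prime_X_sub_X {i j : Fin n} (hij : i ≠ j) :
    Prime (X i - X j : MvPolynomial (Fin n) F) := by
  have hne : (X i - X j : MvPolynomial (Fin n) F) ≠ 0 :=
    sub_ne_zero.mpr fun h => hij (X_injective h)
  rw [← Ideal.span_singleton_prime hne]
  have hker : RingHom.ker (subst F i j).toRingHom
      = Ideal.span {(X i - X j : MvPolynomial (Fin n) F)} := by
    ext p
    simp only [RingHom.mem_ker, AlgHom.toRingHom_eq_coe, RingHom.coe_coe]
    constructor
    · exact fun hp => mem_span_of_subst_eq_zero hp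
    · intro hp
      obtain ⟨c, rfl⟩ := Ideal.mem_span_singleton.mp hp
      rw [map_mul, subst_generator hij, zero_mul]
  rw [← hker, ← Ideal.Quotient.isDomain_iff_prime]
  exact Function.Injective.isDomain
    (RingHom.quotientKerEquivRange (subst F i j).toRingHom).toRingHom
    (RingHom.quotientKerEquivRange (subst F i j).toRingHom).injective

lemma subst_comp_swap (i j : Fin n) :
    ((fun k => if k = j then (X i : MvPolynomial (Fin n) F) else X k) ∘ (Equiv.swap i j))
      = fun k => if k = j then X i else X k := by
  funext k
  rcases eq_or_ne i j with rfl | hij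
  · simp
  rcases eq_or_ne k i with rfl | hki
  · simp [Equiv.swap_apply_left, hij]
  rcases eq_or_ne k j with rfl | hkj
  · simp [Equiv.swap_apply_right, hij.symm]
  · simp [Equiv.swap_apply_of_ne_of_ne hki hkj]

lemma sub_dvd_of_antisym [CharZero F] {a : MvPolynomial (Fin n) F} (ha : Antisym a)
    {i j : Fin n} (hij : i ≠ j) : (X i - X j : MvPolynomial (Fin n) F) ∣ a := by
  have key : subst F i j a = 0 := by
    have h1 : subst F i j (rename (Equiv.swap i j) a) = subst F i j a := by
      show aeval _ _ = aeval _ _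
      rw [aeval_rename, subst_comp_swap]
    rw [ha i j hij, map_neg] at h1
    have h2 : subst F i j a + subst F i j a = 0 := by
      nth_rewrite 1 [← h1]
      exact neg_add_cancel _
    have h3 : (C (2 : F) : MvPolynomial (Fin n) F) * subst F i j a = 0 := by
      have : (C (2 : F) : MvPolynomial (Fin n) F) = 2 := by
        rw [map_ofNat]
      rw [this, two_mul]
      exact h2
    rcases mul_eq_zero.mp h3 with h | h
    · exact absurd (MvPolynomial.C_eq_zero.mp h) two_ne_zero
    · exact h
  exact Ideal.mem_span_singleton.mp (mem_span_of_subst_eq_zero key)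

lemma not_dvd_of_pairs {i j k l : Fin n} (hij : i < j) (hkl : k < l)
    (hne : (i, j) ≠ (k, l)) :
    ¬ (X i - X j : MvPolynomial (Fin n) F) ∣ (X k - X l) := by
  intro hdvd
  have h0 := map_dvd (subst F i j) hdvd
  rw [subst_generator hij.ne, zero_dvd_iff, map_sub, subst_X, subst_X] at h0
  split_ifs at h0 with h1 h2 h2
  · exact hkl.ne (h1.trans h2.symm)
  · exact (hij.trans (h1 ▸ hkl)).ne (X_injective (sub_eq_zero.mp h0))
  · exact hne (Prod.ext (X_injective (sub_eq_zero.mp h0)).symm h2.symm)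
  · exact hkl.ne (X_injective (sub_eq_zero.mp h0))

lemma prod_prime_dvd {ι : Type*} {s : Finset ι} {f : ι → MvPolynomial (Fin n) F}
    (hp : ∀ x ∈ s, Prime (f x)) (hnd : ∀ x ∈ s, ∀ y ∈ s, x ≠ y → ¬ f x ∣ f y) :
    ∀ a : MvPolynomial (Fin n) F, (∀ x ∈ s, f x ∣ a) → ∏ x ∈ s, f x ∣ a := by
  induction s using Finset.cons_induction with
  | empty => simp
  | cons x s hx ih =>
    intro a hd
    obtain ⟨b, rfl⟩ := hd x (Finset.mem_cons_self _ _)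
    rw [Finset.prod_cons]
    refine mul_dvd_mul_left _ (ih (fun y hy => hp y (Finset.mem_cons_of_mem hy))
      (fun y hy z hz hyz => hnd y (Finset.mem_cons_of_mem hy) z (Finset.mem_cons_of_mem hz) hyz)
      b fun y hy => ?_)
    have hdy : f y ∣ f x * b := hd y (Finset.mem_cons_of_mem hy)
    rcases (hp y (Finset.mem_cons_of_mem hy)).2.2 _ _ hdy with h | h
    · exact absurd h (hnd y (Finset.mem_cons_of_mem hy) x (Finset.mem_cons_self _ _)
        (fun hyx => hx (hyx ▸ hy)))
    · exact h

lemma vandermonde_dvd [CharZero F] {a : MvPolynomial (Fin n) F} (ha : Antisym a) :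
    vandermonde F n ∣ a := by
  unfold vandermonde
  refine prod_prime_dvd ?_ ?_ a ?_
  · rintro ⟨i, j⟩ hq
    rw [Finset.mem_filter] at hq
    exact prime_X_sub_X hq.2.ne
  · rintro ⟨i, j⟩ hq ⟨k, l⟩ hq' hne
    rw [Finset.mem_filter] at hq hq'
    exact not_dvd_of_pairs hq.2 hq'.2 (by simpa using hne)
  · rintro ⟨i, j⟩ hq
    rw [Finset.mem_filter] at hq
    exact sub_dvd_of_antisym ha hq.2.ne

lemma isSymmetric_of_swaps {q : MvPolynomial (Fin n) F}
    (h : ∀ i j : Fin n, i ≠ j → rename (Equiv.swap i j) q = q) : q.IsSymmetric := by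
  intro σ
  refine Equiv.Perm.swap_induction_on σ (by simp) fun f x y hxy hf => ?_
  have hcoe : ⇑(Equiv.swap x y * f) = ⇑(Equiv.swap x y) ∘ ⇑f := rfl
  rw [hcoe, ← rename_rename, hf, h x y hxy]

lemma isHomogeneous_of_mul_right {p g : MvPolynomial (Fin n) F} {N d : ℕ}
    (hg : g.IsHomogeneous N) (hg0 : g ≠ 0) (h : (p * g).IsHomogeneous (d + N)) :
    p.IsHomogeneous d := by
  have key : ∀ e : ℕ, e ≠ d → homogeneousComponent e p = 0 := by
    intro e he
    have h1 : homogeneousComponent (e + N) (p * g) = homogeneousComponent e p * g := by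
      conv_lhs => rw [← sum_homogeneousComponent p, Finset.sum_mul, map_sum]
      rw [Finset.sum_eq_single e]
      · exact (homogeneousComponent_of_mem
          ((mem_homogeneousSubmodule _ _).mpr
            ((homogeneousComponent_isHomogeneous e p).mul hg))).trans (if_pos rfl)
      · intro b _ hbe
        rw [homogeneousComponent_of_mem ((mem_homogeneousSubmodule _ _).mpr
          ((homogeneousComponent_isHomogeneous b p).mul hg)), if_neg (by omega)]
      · intro hme
        rw [homogeneousComponent_eq_zero _ p (by simp only [Finset.mem_range] at hme; omega),
          zero_mul, map_zero]
    have h2 : homogeneousComponent (e + N) (p * g) = 0 := by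
      rw [homogeneousComponent_of_mem ((mem_homogeneousSubmodule _ _).mpr h),
        if_neg (by omega)]
    rw [h1] at h2
    rcases mul_eq_zero.mp h2 with h' | h'
    · exact h'
    · exact absurd h' hg0
  have hp : p = homogeneousComponent d p := by
    conv_lhs => rw [← sum_homogeneousComponent p]
    exact Finset.sum_eq_single d (fun b _ hb => key b hb)
      (fun hd => homogeneousComponent_eq_zero _ p
        (by simp only [Finset.mem_range] at hd; omega))
  rw [hp]
  exact homogeneousComponent_isHomogeneous d p

end Stmt6Aux

open Stmt6Aux

theorem stmt_6 (F : Type*) [Field F] [CharZero F] (n : ℕ) (hn : 0 < n) :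
    -- `q ↦ q·Δ` maps `R` into `A`:
    (∀ q : MvPolynomial (Fin n) F, q.IsSymmetric → TransInv q →
      Antisym (q * vandermonde F n) ∧ TransInv (q * vandermonde F n)) ∧
    -- and it is a linear bijection of `R` onto `A`:
    (∀ a : MvPolynomial (Fin n) F, Antisym a → TransInv a →
      ∃! q : MvPolynomial (Fin n) F, q.IsSymmetric ∧ TransInv q ∧ q * vandermonde F n = a) ∧
    -- moreover it matches the degree-`d` part of `R` with the homogeneous translation
    -- invariant antisymmetric polynomials of degree `d + n(n-1)/2`:
    (∀ d : ℕ, ∀ q : MvPolynomial (Fin n) F, q.IsSymmetric → TransInv q →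
      (q.IsHomogeneous d ↔ (q * vandermonde F n).IsHomogeneous (d + n * (n - 1) / 2))) := by
  have hΔne : vandermonde F n ≠ 0 := vandermonde_ne_zero
  refine ⟨?_, ?_, ?_⟩
  · intro q hsym htr
    constructor
    · intro i j hij
      rw [map_mul, hsym (Equiv.swap i j), rename_swap_vandermonde hij]
      ring
    · intro c
      rw [map_mul, htr c, transInv_vandermonde c]
  · intro a ha htr
    obtain ⟨q, hq⟩ := vandermonde_dvd ha
    have hqa : q * vandermonde F n = a := by rw [hq]; ring
    refine ⟨q, ⟨?_, ?_, hqa⟩, ?_⟩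
    · refine isSymmetric_of_swaps fun i j hij => ?_
      refine mul_right_cancel₀ hΔne ?_
      have h1 := congrArg (rename (Equiv.swap i j)) hqa
      rw [map_mul, rename_swap_vandermonde hij, ha i j hij, ← hqa] at h1
      have h2 : -(rename (Equiv.swap i j) q * vandermonde F n) = -(q * vandermonde F n) := by
        rw [← h1]; ring
      exact neg_injective h2
    · intro c
      refine mul_right_cancel₀ hΔne ?_
      have h1 := congrArg (aeval fun i : Fin n => X i + C c) hqa
      rw [map_mul, transInv_vandermonde c, htr c, ← hqa] at h1
      exact h1
    · rintro q' ⟨_, _, hq'⟩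
      exact mul_right_cancel₀ hΔne (hq'.trans hqa.symm)
  · intro d q _ _
    constructor
    · intro h
      exact h.mul vandermonde_isHomogeneous
    · intro h
      exact isHomogeneous_of_mul_right vandermonde_isHomogeneous hΔne h
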